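/- Let i,j,k ≥ 0 with i ≥ j+k, so that the 18-neighbor distance from (0,0,0) to (i,j,k) equals i. Then the number of shortest 18-neighbor paths from (0,0,0) to (i,j,k) equals the sum over all nonnegative integers a,b with 2(a+b) ≤ i−j−k of i! / (a!·b!·(k+a)!·(j+b)!·(i−j−k−2(a+b))!). -/

import Mathlib

/-- Two points of `ℤ³` are 18-neighbors: distinct, each coordinate differs by at most 1,
and the sum of absolute coordinate differences is at most 2. -/
def Adj18 (p q : ℤ × ℤ × ℤ) : Prop :=
  p ≠ q ∧ (p.1 - q.1).natAbs ≤ 1 ∧ (p.2.1 - q.2.1).natAbs ≤ 1 ∧ (p.2.2 - q.2.2).natAbs ≤ 1 ∧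
    (p.1 - q.1).natAbs + (p.2.1 - q.2.1).natAbs + (p.2.2 - q.2.2).natAbs ≤ 2

/-- `f` is an 18-neighbor path of length `n` from `p` to `q`. -/
def IsPath18 (n : ℕ) (f : Fin (n + 1) → ℤ × ℤ × ℤ) (p q : ℤ × ℤ × ℤ) : Prop :=
  f 0 = p ∧ f (Fin.last n) = q ∧ ∀ t : Fin n, Adj18 (f t.castSucc) (f t.succ)

namespace Count18

open Finset


variable {α : Type*} [Fintype α] [DecidableEq α]

/-- number of `t` with `c t = x` -/
def fibCard {n : ℕ} (c : Fin n → α) (x : α) : ℕ := (univ.filter (fun t => c t = x)).card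

lemma fibCard_sum {n : ℕ} (c : Fin n → α) : ∑ x : α, fibCard c x = n := by
  have := (Finset.card_eq_sum_card_fiberwise (f := c) (s := univ) (t := univ)
    (fun t _ => mem_univ _)).symm
  simpa [fibCard] using this

lemma fibCard_snoc {n : ℕ} (c : Fin n → α) (x₀ y : α) :
    fibCard (Fin.snoc c x₀) y = fibCard c y + if x₀ = y then 1 else 0 := by
  unfold fibCard
  rw [Finset.card_filter, Finset.card_filter, Fin.sum_univ_castSucc]
  simp

lemma multinomial_rec (m : α → ℕ) {n : ℕ} (hm : ∑ x : α, m x = n + 1) :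
    Nat.multinomial univ m
      = ∑ x : α, if m x = 0 then 0 else Nat.multinomial univ (Function.update m x (m x - 1)) := by
  have hpos : 0 < ∏ x : α, (m x).factorial := Finset.prod_pos fun x _ => Nat.factorial_pos _
  apply Nat.eq_of_mul_eq_mul_left hpos
  rw [Nat.multinomial_spec, hm, Finset.mul_sum]
  have key : ∀ x : α,
      (∏ y : α, (m y).factorial) *
        (if m x = 0 then 0 else Nat.multinomial univ (Function.update m x (m x - 1)))
      = m x * n.factorial := by
    intro x
    by_cases hx : m x = 0
    · simp [hx]
    · rw [if_neg hx]
      have hprod : (∏ y : α, (m y).factorial)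
          = m x * ∏ y : α, ((Function.update m x (m x - 1)) y).factorial := by
        rw [← Finset.mul_prod_erase univ (fun y => (m y).factorial) (mem_univ x),
            ← Finset.mul_prod_erase univ (fun y => ((Function.update m x (m x - 1)) y).factorial)
              (mem_univ x)]
        have h1 : ∏ y ∈ univ.erase x, ((Function.update m x (m x - 1)) y).factorial
            = ∏ y ∈ univ.erase x, (m y).factorial := by
          refine Finset.prod_congr rfl fun y hy => ?_
          rw [Function.update_of_ne (Finset.ne_of_mem_erase hy)]
        rw [h1, Function.update_self, ← Nat.mul_factorial_pred hx]
        ring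
      rw [hprod, mul_assoc, Nat.multinomial_spec]
      have hsum : ∑ y : α, (Function.update m x (m x - 1)) y = n := by
        rw [Finset.sum_update_of_mem (mem_univ x), Finset.sdiff_singleton_eq_erase]
        have := Finset.add_sum_erase univ m (mem_univ x)
        omega
      rw [hsum]
  rw [Finset.sum_congr rfl fun x _ => key x, ← Finset.sum_mul, hm]
  rw [Nat.factorial_succ]

def snocEquiv {n : ℕ} (m : α → ℕ) (x : α) (hx : m x ≠ 0) :
    {c : Fin (n+1) → α // (∀ y, fibCard c y = m y) ∧ c (Fin.last n) = x}
      ≃ {c : Fin n → α // ∀ y, fibCard c y = Function.update m x (m x - 1) y} where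
  toFun c := ⟨Fin.init c.1, by
    have hxpos : 0 < m x := Nat.pos_of_ne_zero hx
    intro y
    have hsnoc : Fin.snoc (Fin.init c.1) x = c.1 := by
      have h3 := Fin.snoc_init_self c.1
      rwa [c.2.2] at h3
    have h2 := fibCard_snoc (Fin.init c.1) x y
    rw [hsnoc, c.2.1 y] at h2
    rcases eq_or_ne y x with rfl | hne
    · rw [Function.update_self]; rw [if_pos rfl] at h2; omega
    · rw [Function.update_of_ne hne]; rw [if_neg (Ne.symm hne)] at h2; omega⟩
  invFun c := ⟨Fin.snoc c.1 x, by
    have hxpos : 0 < m x := Nat.pos_of_ne_zero hx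
    refine ⟨fun y => ?_, Fin.snoc_last _ _⟩
    rw [fibCard_snoc, c.2 y]
    rcases eq_or_ne y x with rfl | hne
    · rw [Function.update_self, if_pos rfl]; omega
    · rw [Function.update_of_ne hne, if_neg (Ne.symm hne), add_zero]⟩
  left_inv c := by
    apply Subtype.ext
    show Fin.snoc (Fin.init c.1) x = c.1
    have h3 := Fin.snoc_init_self c.1
    rwa [c.2.2] at h3
  right_inv c := by
    apply Subtype.ext
    exact Fin.init_snoc (α := fun _ => α) x c.1

lemma card_fibCard : ∀ (n : ℕ) (m : α → ℕ), (∑ x : α, m x = n) →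
    Fintype.card {c : Fin n → α // ∀ x, fibCard c x = m x} = Nat.multinomial univ m := by
  intro n
  induction n with
  | zero =>
    intro m hm
    have hm0 : ∀ x, m x = 0 := fun x => Finset.sum_eq_zero_iff.mp hm x (mem_univ x)
    have h1 : Nat.multinomial univ m = 1 := by
      unfold Nat.multinomial
      simp [hm0]
    rw [h1]
    rw [Fintype.card_eq_one_iff]
    refine ⟨⟨Fin.elim0, fun x => ?_⟩, fun c => ?_⟩
    · rw [hm0 x]; simp [fibCard]
    · apply Subtype.ext; funext t; exact t.elim0
  | succ n ih =>
    intro m hm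
    rw [Fintype.card_subtype]
    rw [Finset.card_eq_sum_card_fiberwise
      (f := fun c : Fin (n+1) → α => c (Fin.last n)) (t := univ) (fun c _ => mem_univ _)]
    rw [multinomial_rec m hm]
    refine Finset.sum_congr rfl fun x _ => ?_
    rw [Finset.filter_filter]
    by_cases hx : m x = 0
    · rw [if_pos hx]
      rw [Finset.card_eq_zero, Finset.filter_eq_empty_iff]
      rintro c - ⟨hc, hcx⟩
      have h1 : 0 < fibCard c x := by
        rw [fibCard, Finset.card_pos]
        exact ⟨Fin.last n, by simp [hcx]⟩
      have h2 := hc x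
      omega
    · rw [if_neg hx]
      have h' : ∑ y : α, Function.update m x (m x - 1) y = n := by
        rw [Finset.sum_update_of_mem (mem_univ x), Finset.sdiff_singleton_eq_erase]
        have := Finset.add_sum_erase univ m (mem_univ x)
        omega
      have e : Fintype.card {c : Fin (n+1) → α //
            (∀ y, fibCard c y = m y) ∧ c (Fin.last n) = x}
          = Nat.multinomial univ (Function.update m x (m x - 1)) := by
        rw [Fintype.card_congr (snocEquiv (n := n) m x hx)]
        exact ih _ h'
      rw [← e, Fintype.card_subtype]

lemma card_fibCard' (n : ℕ) (m : α → ℕ) (h : ∑ x : α, m x = n) :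
    Nat.card {c : Fin n → α // ∀ x, fibCard c x = m x} = Nat.multinomial univ m :=
  Nat.card_eq_fintype_card.trans (card_fibCard n m h)


open Finset

def V : Fin 5 → ℤ × ℤ := ![(0,0), (1,0), (-1,0), (0,1), (0,-1)]

def decode (v : ℤ × ℤ) : Fin 5 :=
  if v.1 = 1 then 1 else if v.1 = -1 then 2 else if v.2 = 1 then 3 else if v.2 = -1 then 4 else 0

lemma decode_V (x : Fin 5) : decode (V x) = x := by
  fin_cases x <;> simp [decode, V]

lemma V_natAbs (x : Fin 5) : (V x).1.natAbs + (V x).2.natAbs ≤ 1 := by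
  fin_cases x <;> simp [V]

lemma V_decode {v : ℤ × ℤ} (h1 : v.1.natAbs + v.2.natAbs ≤ 1) : V (decode v) = v := by
  obtain ⟨a, b⟩ := v
  simp only at h1
  have ha : a = 0 ∨ a = 1 ∨ a = -1 := by omega
  have hb : b = 0 ∨ b = 1 ∨ b = -1 := by omega
  rcases ha with rfl | rfl | rfl <;> rcases hb with rfl | rfl | rfl <;>
    simp_all [decode, V] <;> omega

def vy {n : ℕ} (c : Fin n → Fin 5) (t : ℕ) : ℤ := if h : t < n then (V (c ⟨t, h⟩)).1 else 0
def vz {n : ℕ} (c : Fin n → Fin 5) (t : ℕ) : ℤ := if h : t < n then (V (c ⟨t, h⟩)).2 else 0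

def pathOf {n : ℕ} (c : Fin n → Fin 5) (s : Fin (n+1)) : ℤ × ℤ × ℤ :=
  ((s : ℤ), ∑ t ∈ Finset.range s, vy c t, ∑ t ∈ Finset.range s, vz c t)

lemma pathOf_zero {n : ℕ} (c : Fin n → Fin 5) : pathOf c 0 = (0, 0, 0) := by
  simp [pathOf]

lemma pathOf_succ {n : ℕ} (c : Fin n → Fin 5) (t : Fin n) :
    pathOf c t.succ = pathOf c t.castSucc + (1, (V (c t)).1, (V (c t)).2) := by
  have hy : vy c t.1 = (V (c t)).1 := by rw [vy, dif_pos t.isLt]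
  have hz : vz c t.1 = (V (c t)).2 := by rw [vz, dif_pos t.isLt]
  simp only [pathOf, Fin.val_succ, Fin.coe_castSucc, Finset.sum_range_succ, hy, hz,
    Prod.mk_add_mk]
  refine Prod.ext ?_ (Prod.ext rfl rfl)
  push_cast
  ring

lemma pathOf_last {n : ℕ} (c : Fin n → Fin 5) :
    pathOf c (Fin.last n) = ((n : ℤ), ∑ t : Fin n, (V (c t)).1, ∑ t : Fin n, (V (c t)).2) := by
  have hy : ∑ t ∈ Finset.range n, vy c t = ∑ t : Fin n, (V (c t)).1 := by
    rw [← Fin.sum_univ_eq_sum_range (vy c) n]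
    exact Finset.sum_congr rfl fun t _ => by rw [vy, dif_pos t.isLt]
  have hz : ∑ t ∈ Finset.range n, vz c t = ∑ t : Fin n, (V (c t)).2 := by
    rw [← Fin.sum_univ_eq_sum_range (vz c) n]
    exact Finset.sum_congr rfl fun t _ => by rw [vz, dif_pos t.isLt]
  simp [pathOf, hy, hz]

lemma telescope {M : Type*} [AddCommGroup M] :
    ∀ {n : ℕ} (g : Fin (n+1) → M),
      ∑ t : Fin n, (g t.succ - g t.castSucc) = g (Fin.last n) - g 0 := by
  intro n
  induction n with
  | zero => intro g; simp [Fin.last]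
  | succ n ih =>
    intro g
    rw [Fin.sum_univ_castSucc]
    have h1 := ih (fun s : Fin (n+1) => g s.castSucc)
    have h2 : ∀ t : Fin n, g t.castSucc.succ - g t.castSucc.castSucc
        = g t.succ.castSucc - g t.castSucc.castSucc := by
      intro t; rw [Fin.succ_castSucc]
    rw [Finset.sum_congr rfl fun t _ => h2 t, h1, Fin.succ_last]
    have h0 : (0 : Fin (n+1)).castSucc = 0 := rfl
    rw [h0]
    abel

lemma adj_step (p : ℤ × ℤ × ℤ) (x : Fin 5) : Adj18 p (p + ((1 : ℤ), (V x).1, (V x).2)) := by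
  obtain ⟨a, b, c⟩ := p
  fin_cases x <;> simp [Adj18, V, Prod.ext_iff] <;> omega

lemma isPath_pathOf {n : ℕ} {jz kz : ℤ} (c : Fin n → Fin 5)
    (hy : ∑ t : Fin n, (V (c t)).1 = jz) (hz : ∑ t : Fin n, (V (c t)).2 = kz) :
    IsPath18 n (pathOf c) (0, 0, 0) ((n : ℤ), jz, kz) := by
  refine ⟨pathOf_zero c, ?_, fun t => ?_⟩
  · rw [pathOf_last, hy, hz]
  · rw [pathOf_succ]
    exact adj_step _ _

def stepsOf {n : ℕ} (f : Fin (n+1) → ℤ × ℤ × ℤ) (t : Fin n) : Fin 5 :=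
  decode ((f t.succ).2.1 - (f t.castSucc).2.1, (f t.succ).2.2 - (f t.castSucc).2.2)

variable {n : ℕ} {jz kz : ℤ} {f : Fin (n+1) → ℤ × ℤ × ℤ}

lemma step_eq (hf : IsPath18 n f (0, 0, 0) ((n : ℤ), jz, kz)) (t : Fin n) :
    f t.succ = f t.castSucc + ((1 : ℤ), (V (stepsOf f t)).1, (V (stepsOf f t)).2) := by
  obtain ⟨h0, hl, hadj⟩ := hf
  have htel : ∑ t : Fin n, ((f t.succ).1 - (f t.castSucc).1) = (n : ℤ) := by
    rw [telescope (fun s => (f s).1), hl, h0]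
    simp
  have hle : ∀ t : Fin n, (f t.succ).1 - (f t.castSucc).1 ≤ 1 := by
    intro t
    have := (hadj t).2.1
    omega
  have hall : ∀ t : Fin n, (f t.succ).1 - (f t.castSucc).1 = 1 := by
    have hz0 : ∑ t : Fin n, (1 - ((f t.succ).1 - (f t.castSucc).1)) = 0 := by
      rw [Finset.sum_sub_distrib, htel]
      simp
    intro t
    have := (Finset.sum_eq_zero_iff_of_nonneg
      (fun t _ => by have := hle t; omega)).mp hz0 t (mem_univ t)
    omega
  have hadjt := hadj t
  obtain ⟨-, h1, h2, h3, h4⟩ := hadjt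
  have hdx := hall t
  have hyz : ((f t.succ).2.1 - (f t.castSucc).2.1).natAbs
      + ((f t.succ).2.2 - (f t.castSucc).2.2).natAbs ≤ 1 := by omega
  have hV : V (stepsOf f t) = ((f t.succ).2.1 - (f t.castSucc).2.1,
      (f t.succ).2.2 - (f t.castSucc).2.2) := V_decode hyz
  rw [hV]
  refine Prod.ext ?_ (Prod.ext ?_ ?_) <;> simp <;> omega

lemma steps_sum_y (hf : IsPath18 n f (0, 0, 0) ((n : ℤ), jz, kz)) :
    ∑ t : Fin n, (V (stepsOf f t)).1 = jz := by
  have h1 : ∀ t : Fin n, (V (stepsOf f t)).1 = (f t.succ).2.1 - (f t.castSucc).2.1 := by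
    intro t
    have := congrArg (fun p => p.2.1) (step_eq hf t)
    simp at this
    omega
  rw [Finset.sum_congr rfl fun t _ => h1 t, telescope (fun s => (f s).2.1), hf.2.1, hf.1]
  simp

lemma steps_sum_z (hf : IsPath18 n f (0, 0, 0) ((n : ℤ), jz, kz)) :
    ∑ t : Fin n, (V (stepsOf f t)).2 = kz := by
  have h1 : ∀ t : Fin n, (V (stepsOf f t)).2 = (f t.succ).2.2 - (f t.castSucc).2.2 := by
    intro t
    have := congrArg (fun p => p.2.2) (step_eq hf t)
    simp at this
    omega
  rw [Finset.sum_congr rfl fun t _ => h1 t, telescope (fun s => (f s).2.2), hf.2.1, hf.1]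
  simp

lemma pathOf_stepsOf (hf : IsPath18 n f (0, 0, 0) ((n : ℤ), jz, kz)) :
    pathOf (stepsOf f) = f := by
  funext s
  induction s using Fin.induction with
  | zero => rw [pathOf_zero, hf.1]
  | succ t ih => rw [pathOf_succ, ih, ← step_eq hf t]

lemma stepsOf_pathOf (c : Fin n → Fin 5) : stepsOf (pathOf c) = c := by
  funext t
  rw [stepsOf]
  have h := pathOf_succ c t
  rw [h]
  simp only [Prod.snd_add, Prod.fst_add, add_sub_cancel_left]
  exact decode_V (c t)

def pathStepsEquiv (n : ℕ) (jz kz : ℤ) :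
    {f : Fin (n+1) → ℤ × ℤ × ℤ // IsPath18 n f (0, 0, 0) ((n : ℤ), jz, kz)}
      ≃ {c : Fin n → Fin 5 // (∑ t : Fin n, (V (c t)).1 = jz) ∧
          (∑ t : Fin n, (V (c t)).2 = kz)} where
  toFun f := ⟨stepsOf f.1, steps_sum_y f.2, steps_sum_z f.2⟩
  invFun c := ⟨pathOf c.1, isPath_pathOf c.1 c.2.1 c.2.2⟩
  left_inv f := Subtype.ext (pathOf_stepsOf f.2)
  right_inv c := Subtype.ext (stepsOf_pathOf c.1)


open Finset

lemma sum_V_fst {n : ℕ} (c : Fin n → Fin 5) :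
    ∑ t : Fin n, (V (c t)).1 = (fibCard c 1 : ℤ) - (fibCard c 2 : ℤ) := by
  have h1 : ∀ t, (V (c t)).1 = ∑ x : Fin 5, if c t = x then (V x).1 else 0 := by
    intro t; rw [Finset.sum_ite_eq]; simp
  rw [Finset.sum_congr rfl fun t _ => h1 t, Finset.sum_comm]
  have h2 : ∀ x : Fin 5, ∑ t : Fin n, (if c t = x then (V x).1 else 0)
      = (fibCard c x : ℤ) * (V x).1 := by
    intro x
    rw [← Finset.sum_filter, Finset.sum_const, fibCard]
    simp
  rw [Finset.sum_congr rfl fun x _ => h2 x, Fin.sum_univ_five]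
  simp [V]
  ring

lemma sum_V_snd {n : ℕ} (c : Fin n → Fin 5) :
    ∑ t : Fin n, (V (c t)).2 = (fibCard c 3 : ℤ) - (fibCard c 4 : ℤ) := by
  have h1 : ∀ t, (V (c t)).2 = ∑ x : Fin 5, if c t = x then (V x).2 else 0 := by
    intro t; rw [Finset.sum_ite_eq]; simp
  rw [Finset.sum_congr rfl fun t _ => h1 t, Finset.sum_comm]
  have h2 : ∀ x : Fin 5, ∑ t : Fin n, (if c t = x then (V x).2 else 0)
      = (fibCard c x : ℤ) * (V x).2 := by
    intro x
    rw [← Finset.sum_filter, Finset.sum_const, fibCard]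
    simp
  rw [Finset.sum_congr rfl fun x _ => h2 x, Fin.sum_univ_five]
  simp [V]
  ring

lemma fibCard_sum_five {n : ℕ} (c : Fin n → Fin 5) :
    fibCard c 0 + fibCard c 1 + fibCard c 2 + fibCard c 3 + fibCard c 4 = n := by
  have := fibCard_sum c
  rw [Fin.sum_univ_five] at this
  omega

lemma card_filter_univ_eq_nat_card {β : Type*} [Fintype β] (p : β → Prop) [DecidablePred p] :
    (Finset.univ.filter p).card = Nat.card {x // p x} := by
  rw [Nat.card_eq_fintype_card, Fintype.card_subtype]

end Count18

open Count18 Finset in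
set_option maxHeartbeats 2000000 in
/-- If `i ≥ j + k`, the 18-distance from the origin to `(i,j,k)` is `i`, and the number of
shortest 18-neighbor paths equals
`∑_{a,b ≥ 0, 2(a+b) ≤ i−j−k} i!/(a!·b!·(k+a)!·(j+b)!·(i−j−k−2(a+b))!)`. -/
theorem count_shortest_paths_18N_case1 (i j k : ℕ) (h : j + k ≤ i) :
    Nat.card {f : Fin (i + 1) → ℤ × ℤ × ℤ //
        IsPath18 i f (0, 0, 0) ((i : ℤ), (j : ℤ), (k : ℤ))} =
      ∑ a ∈ Finset.range (i + 1), ∑ b ∈ Finset.range (i + 1),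
        if 2 * (a + b) ≤ i - j - k then
          Nat.factorial i /
            (Nat.factorial a * Nat.factorial b * Nat.factorial (k + a) *
              Nat.factorial (j + b) * Nat.factorial (i - j - k - 2 * (a + b)))
        else 0 := by
  rw [Nat.card_congr (pathStepsEquiv i (j : ℤ) (k : ℤ))]
  rw [Nat.card_eq_fintype_card, Fintype.card_subtype]
  have hmem : ∀ c ∈ univ.filter (fun c : Fin i → Fin 5 =>
      (∑ t : Fin i, (V (c t)).1 = (j : ℤ)) ∧ (∑ t : Fin i, (V (c t)).2 = (k : ℤ))),
      (fibCard c 4, fibCard c 2) ∈ (range (i+1)) ×ˢ (range (i+1)) := by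
    intro c _
    have h4 : fibCard c 4 ≤ i := (Finset.card_filter_le _ _).trans (by simp)
    have h2 : fibCard c 2 ≤ i := (Finset.card_filter_le _ _).trans (by simp)
    simp [Finset.mem_product]
    omega
  rw [Finset.card_eq_sum_card_fiberwise hmem, Finset.sum_product]
  refine Finset.sum_congr rfl fun a _ => Finset.sum_congr rfl fun b _ => ?_
  rw [Finset.filter_filter]
  by_cases hcond : 2 * (a + b) ≤ i - j - k
  · rw [if_pos hcond]
    set M : Fin 5 → ℕ := ![i - j - k - 2*(a+b), j + b, b, k + a, a] with hM
    have hMval : M 0 = i - j - k - 2*(a+b) ∧ M 1 = j + b ∧ M 2 = b ∧ M 3 = k + a ∧ M 4 = a := by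
      refine ⟨rfl, rfl, rfl, rfl, rfl⟩
    obtain ⟨hM0, hM1, hM2, hM3, hM4⟩ := hMval
    have hMsum : ∑ x : Fin 5, M x = i := by
      rw [Fin.sum_univ_five, hM0, hM1, hM2, hM3, hM4]
      omega
    have hfilter : (univ.filter fun c : Fin i → Fin 5 =>
          ((∑ t : Fin i, (V (c t)).1 = (j : ℤ)) ∧ (∑ t : Fin i, (V (c t)).2 = (k : ℤ)))
            ∧ (fibCard c 4, fibCard c 2) = (a, b))
        = univ.filter fun c : Fin i → Fin 5 => ∀ x, fibCard c x = M x := by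
      refine Finset.filter_congr fun c _ => ?_
      have htot := fibCard_sum_five c
      rw [sum_V_fst, sum_V_snd, Prod.mk.injEq]
      constructor
      · rintro ⟨⟨hy, hz⟩, h4, h2⟩
        intro x
        fin_cases x
        · show fibCard c 0 = M 0; rw [hM0]; omega
        · show fibCard c 1 = M 1; rw [hM1]; omega
        · show fibCard c 2 = M 2; rw [hM2]; omega
        · show fibCard c 3 = M 3; rw [hM3]; omega
        · show fibCard c 4 = M 4; rw [hM4]; omega
      · intro hfib
        have e0 := hfib 0; have e1 := hfib 1; have e2 := hfib 2
        have e3 := hfib 3; have e4 := hfib 4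
        rw [hM0] at e0; rw [hM1] at e1; rw [hM2] at e2; rw [hM3] at e3; rw [hM4] at e4
        refine ⟨⟨?_, ?_⟩, ?_, ?_⟩ <;> omega
    rw [hfilter, card_filter_univ_eq_nat_card]
    have e1 : Nat.card {c : Fin i → Fin 5 // ∀ x, fibCard c x = M x}
        = Nat.multinomial univ M := card_fibCard' i M hMsum
    have e2 : Nat.multinomial univ M
        = i.factorial / (a.factorial * b.factorial * (k + a).factorial *
            (j + b).factorial * (i - j - k - 2 * (a + b)).factorial) := by
      rw [Nat.multinomial, hMsum, Fin.prod_univ_five, hM0, hM1, hM2, hM3, hM4]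
      congr 1
      ring
    exact e1.trans e2
  · rw [if_neg hcond]
    rw [Finset.card_eq_zero, Finset.filter_eq_empty_iff]
    rintro c - ⟨⟨hy, hz⟩, hpair⟩
    rw [sum_V_fst] at hy
    rw [sum_V_snd] at hz
    rw [Prod.mk.injEq] at hpair
    have htot := fibCard_sum_five c
    omega
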